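/- Let V be a finite-dimensional complex vector space and let D, D' ⊆ ℤ² be finite diagrams such that no integer occurs as the first coordinate of both a cell of D and a cell of D', and no integer occurs as the second coordinate of both a cell of D and a cell of D'. Then there is a GL(V)-equivariant linear isomorphism V[D ∪ D'] ≅ V[D] ⊗ V[D']. -/

import Mathlib

open scoped TensorProduct

/-- The Young symmetrizer operator of a finite diagram `D ⊆ ℤ²` on `V^{⊗D}`. -/
noncomputable def youngOp (V : Type*) [AddCommGroup V] [Module ℂ V]
    (D : Finset (ℤ × ℤ)) :
    (⨂[ℂ] _ : D, V) →ₗ[ℂ] (⨂[ℂ] _ : D, V) :=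
  ∑ p : Equiv.Perm D, ∑ q : Equiv.Perm D,
    if (∀ x : D, ((p x : ℤ × ℤ)).1 = (x : ℤ × ℤ).1) ∧
        (∀ x : D, ((q x : ℤ × ℤ)).2 = (x : ℤ × ℤ).2) then
      ((Equiv.Perm.sign q : ℤ) : ℂ) •
        (PiTensorProduct.reindex ℂ (fun _ : D => V) (q * p)).toLinearMap
    else 0

/-- The generalized Schur module `V[D] = V^{⊗D}·y_D`. -/
noncomputable def schurModule (V : Type*) [AddCommGroup V] [Module ℂ V]
    (D : Finset (ℤ × ℤ)) : Submodule ℂ (⨂[ℂ] _ : D, V) :=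
  LinearMap.range (youngOp V D)

/-- The diagonal action of `g ∈ GL(V)` on the tensor power `V^{⊗D}`. -/
noncomputable def glOp (V : Type*) [AddCommGroup V] [Module ℂ V]
    (D : Finset (ℤ × ℤ)) (g : V ≃ₗ[ℂ] V) :
    (⨂[ℂ] _ : D, V) →ₗ[ℂ] (⨂[ℂ] _ : D, V) :=
  PiTensorProduct.map (fun _ : D => g.toLinearMap)

namespace Stmt14Aux

open PiTensorProduct Finset

/-- Reindexing by a permutation, as a linear map. -/
noncomputable def rLM (V : Type*) [AddCommGroup V] [Module ℂ V]
    (S : Finset (ℤ × ℤ)) (σ : Equiv.Perm S) :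
    (⨂[ℂ] _ : S, V) →ₗ[ℂ] (⨂[ℂ] _ : S, V) :=
  (PiTensorProduct.reindex ℂ (fun _ : S => V) σ).toLinearMap

/-- Row-preserving permutations. -/
def RowP (S : Finset (ℤ × ℤ)) (p : Equiv.Perm S) : Prop :=
  ∀ x : S, ((p x : ℤ × ℤ)).1 = (x : ℤ × ℤ).1

/-- Column-preserving permutations. -/
def ColP (S : Finset (ℤ × ℤ)) (q : Equiv.Perm S) : Prop :=
  ∀ x : S, ((q x : ℤ × ℤ)).2 = (x : ℤ × ℤ).2

noncomputable instance (S : Finset (ℤ × ℤ)) : DecidablePred (RowP S) :=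
  fun _ => Classical.dec _

noncomputable instance (S : Finset (ℤ × ℤ)) : DecidablePred (ColP S) :=
  fun _ => Classical.dec _

variable {V : Type*} [AddCommGroup V] [Module ℂ V]

lemma youngOp_eq_filtered (S : Finset (ℤ × ℤ)) :
    youngOp V S =
      ∑ p ∈ Finset.univ.filter (RowP S), ∑ q ∈ Finset.univ.filter (ColP S),
        ((Equiv.Perm.sign q : ℤ) : ℂ) • rLM V S (q * p) := by
  unfold youngOp
  rw [Finset.sum_filter]
  refine Finset.sum_congr rfl fun p _ => ?_
  by_cases hp : RowP S p
  · rw [if_pos hp, Finset.sum_filter]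
    refine Finset.sum_congr rfl fun q _ => ?_
    by_cases hq : ColP S q
    · rw [if_pos ⟨hp, hq⟩, if_pos hq]
      rfl
    · rw [if_neg (fun h => hq h.2), if_neg hq]
  · rw [if_neg hp]
    exact Finset.sum_eq_zero fun q _ => if_neg (fun h => hp h.1)

lemma glOp_comm_rLM (S : Finset (ℤ × ℤ)) (g : V ≃ₗ[ℂ] V) (σ : Equiv.Perm S)
    (x : ⨂[ℂ] _ : S, V) :
    glOp V S g (rLM V S σ x) = rLM V S σ (glOp V S g x) := by
  simpa [glOp, rLM] using
    PiTensorProduct.map_reindex (fun _ : S => g.toLinearMap) (σ : S ≃ S) x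

lemma glOp_comm_youngOp (S : Finset (ℤ × ℤ)) (g : V ≃ₗ[ℂ] V) (x : ⨂[ℂ] _ : S, V) :
    glOp V S g (youngOp V S x) = youngOp V S (glOp V S g x) := by
  rw [youngOp_eq_filtered]
  simp only [LinearMap.coe_sum, Finset.sum_apply, map_sum, LinearMap.smul_apply, map_smul]
  exact Finset.sum_congr rfl fun p _ => Finset.sum_congr rfl fun q _ => by
    rw [glOp_comm_rLM]

lemma glOp_mem_schurModule (S : Finset (ℤ × ℤ)) (g : V ≃ₗ[ℂ] V) :
    ∀ v ∈ schurModule V S, glOp V S g v ∈ schurModule V S := by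
  rintro v ⟨w, rfl⟩
  exact ⟨glOp V S g w, (glOp_comm_youngOp S g w).symm⟩

section Union

variable (D D' : Finset (ℤ × ℤ))

/-- The union of two disjoint finsets is equivalent to the sum type. -/
def uE (hd : ∀ a ∈ D, a ∉ D') : ↥(D ∪ D') ≃ (↥D ⊕ ↥D') where
  toFun x :=
    if h : (x : ℤ × ℤ) ∈ D then Sum.inl ⟨x, h⟩
    else Sum.inr ⟨x, by
      rcases Finset.mem_union.mp x.2 with h' | h'
      · exact absurd h' h
      · exact h'⟩
  invFun y :=
    Sum.elim (fun a => ⟨a.val, Finset.mem_union_left _ a.property⟩)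
      (fun b => ⟨b.val, Finset.mem_union_right _ b.property⟩) y
  left_inv x := by
    by_cases h : (x : ℤ × ℤ) ∈ D <;> simp [h]
  right_inv y := by
    rcases y with a | b
    · simp [a.property]
    · have hb : (b : ℤ × ℤ) ∉ D := fun h => hd _ h b.property
      simp [hb]

variable (hd : ∀ a ∈ D, a ∉ D')

lemma uE_inD (x : ↥(D ∪ D')) (h : (x : ℤ × ℤ) ∈ D) :
    uE D D' hd x = Sum.inl ⟨x, h⟩ := dif_pos h

lemma uE_inD' (x : ↥(D ∪ D')) (h : (x : ℤ × ℤ) ∈ D') :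
    uE D D' hd x = Sum.inr ⟨x, h⟩ := by
  have hx : (x : ℤ × ℤ) ∉ D := fun h' => hd _ h' h
  simp only [uE, Equiv.coe_fn_mk, dif_neg hx]

@[simp] lemma uE_symm_inl (a : ↥D) :
    (uE D D' hd).symm (Sum.inl a) = ⟨a.val, Finset.mem_union_left _ a.property⟩ := rfl

@[simp] lemma uE_symm_inr (b : ↥D') :
    (uE D D' hd).symm (Sum.inr b) = ⟨b.val, Finset.mem_union_right _ b.property⟩ := rfl

/-- Combine permutations of `D` and `D'` into a permutation of `D ∪ D'`. -/
def sumPerm (σ₁ : Equiv.Perm ↥D) (σ₂ : Equiv.Perm ↥D') : Equiv.Perm ↥(D ∪ D') :=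
  (uE D D' hd).symm.permCongr (Equiv.sumCongr σ₁ σ₂)

lemma sumPerm_apply_inD (σ₁ : Equiv.Perm ↥D) (σ₂ : Equiv.Perm ↥D')
    (x : ↥(D ∪ D')) (h : (x : ℤ × ℤ) ∈ D) :
    sumPerm D D' hd σ₁ σ₂ x
      = ⟨(σ₁ ⟨x, h⟩ : ℤ × ℤ), Finset.mem_union_left _ (σ₁ ⟨x, h⟩).property⟩ := by
  simp only [sumPerm, Equiv.permCongr_apply, Equiv.symm_symm, uE_inD D D' hd x h,
    Equiv.sumCongr_apply, Sum.map_inl, uE_symm_inl]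

lemma sumPerm_apply_inD' (σ₁ : Equiv.Perm ↥D) (σ₂ : Equiv.Perm ↥D')
    (x : ↥(D ∪ D')) (h : (x : ℤ × ℤ) ∈ D') :
    sumPerm D D' hd σ₁ σ₂ x
      = ⟨(σ₂ ⟨x, h⟩ : ℤ × ℤ), Finset.mem_union_right _ (σ₂ ⟨x, h⟩).property⟩ := by
  simp only [sumPerm, Equiv.permCongr_apply, Equiv.symm_symm, uE_inD' D D' hd x h,
    Equiv.sumCongr_apply, Sum.map_inr, uE_symm_inr]

lemma sumPerm_mul (σ₁ τ₁ : Equiv.Perm ↥D) (σ₂ τ₂ : Equiv.Perm ↥D') :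
    sumPerm D D' hd σ₁ σ₂ * sumPerm D D' hd τ₁ τ₂
      = sumPerm D D' hd (σ₁ * τ₁) (σ₂ * τ₂) := by
  refine Equiv.ext fun x => ?_
  simp only [sumPerm, Equiv.Perm.mul_apply, Equiv.permCongr_apply, Equiv.symm_symm,
    Equiv.apply_symm_apply]
  congr 1
  rcases (uE D D' hd x) with a | b <;> rfl

lemma sumPerm_one : sumPerm D D' hd 1 1 = 1 := by
  refine Equiv.ext fun x => ?_
  simp only [sumPerm, Equiv.permCongr_apply, Equiv.symm_symm]
  have h1 : (Equiv.sumCongr (1 : Equiv.Perm ↥D) (1 : Equiv.Perm ↥D')) ((uE D D' hd) x)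
      = uE D D' hd x := by
    rcases uE D D' hd x with a | b <;> rfl
  rw [h1, Equiv.symm_apply_apply]
  rfl

lemma sign_sumPerm (σ₁ : Equiv.Perm ↥D) (σ₂ : Equiv.Perm ↥D') :
    Equiv.Perm.sign (sumPerm D D' hd σ₁ σ₂)
      = Equiv.Perm.sign σ₁ * Equiv.Perm.sign σ₂ := by
  rw [sumPerm, Equiv.Perm.sign_permCongr, Equiv.Perm.sign_sumCongr]

lemma sumPerm_inv (σ₁ : Equiv.Perm ↥D) (σ₂ : Equiv.Perm ↥D') :
    (sumPerm D D' hd σ₁ σ₂)⁻¹ = sumPerm D D' hd σ₁⁻¹ σ₂⁻¹ := by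
  refine inv_eq_of_mul_eq_one_right ?_
  rw [sumPerm_mul]
  simp [sumPerm_one]

lemma sumPerm_symm (σ₁ : Equiv.Perm ↥D) (σ₂ : Equiv.Perm ↥D') :
    (sumPerm D D' hd σ₁ σ₂).symm = sumPerm D D' hd σ₁.symm σ₂.symm := by
  have := sumPerm_inv D D' hd σ₁ σ₂
  simpa [Equiv.Perm.inv_def] using this

/-- Restrict a permutation of `D ∪ D'` that maps `D`-cells to `D`-cells. -/
noncomputable def restrD (p : Equiv.Perm ↥(D ∪ D'))
    (hm : ∀ (x : ℤ × ℤ) (hx : x ∈ D),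
      ((p ⟨x, Finset.mem_union_left _ hx⟩ : ↥(D ∪ D')) : ℤ × ℤ) ∈ D) : Equiv.Perm ↥D :=
  Equiv.ofBijective
    (fun a => ⟨((p ⟨a.val, Finset.mem_union_left _ a.property⟩ : ↥(D ∪ D')) : ℤ × ℤ),
      hm a.val a.property⟩)
    (Finite.injective_iff_bijective.mp (fun a b hab => by
      have h0 := congrArg Subtype.val hab
      have h1 := p.injective (Subtype.ext h0)
      have h2 := Subtype.ext_iff.mp h1
      exact Subtype.ext h2))

/-- Restrict a permutation of `D ∪ D'` that maps `D'`-cells to `D'`-cells. -/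
noncomputable def restrD' (p : Equiv.Perm ↥(D ∪ D'))
    (hm : ∀ (x : ℤ × ℤ) (hx : x ∈ D'),
      ((p ⟨x, Finset.mem_union_right _ hx⟩ : ↥(D ∪ D')) : ℤ × ℤ) ∈ D') : Equiv.Perm ↥D' :=
  Equiv.ofBijective
    (fun a => ⟨((p ⟨a.val, Finset.mem_union_right _ a.property⟩ : ↥(D ∪ D')) : ℤ × ℤ),
      hm a.val a.property⟩)
    (Finite.injective_iff_bijective.mp (fun a b hab => by
      have h0 := congrArg Subtype.val hab
      have h1 := p.injective (Subtype.ext h0)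
      have h2 := Subtype.ext_iff.mp h1
      exact Subtype.ext h2))

lemma restrD_coe (p : Equiv.Perm ↥(D ∪ D')) (hm) (a : ↥D) :
    ((restrD D D' p hm a : ↥D) : ℤ × ℤ)
      = ((p ⟨a.val, Finset.mem_union_left _ a.property⟩ : ↥(D ∪ D')) : ℤ × ℤ) := rfl

lemma restrD'_coe (p : Equiv.Perm ↥(D ∪ D')) (hm) (b : ↥D') :
    ((restrD' D D' p hm b : ↥D') : ℤ × ℤ)
      = ((p ⟨b.val, Finset.mem_union_right _ b.property⟩ : ↥(D ∪ D')) : ℤ × ℤ) := rfl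

lemma mapsD_of_row (hrow : ∀ x ∈ D, ∀ y ∈ D', x.1 ≠ y.1) (p : Equiv.Perm ↥(D ∪ D')) (hp : RowP (D ∪ D') p) :
    ∀ (x : ℤ × ℤ) (hx : x ∈ D),
      ((p ⟨x, Finset.mem_union_left _ hx⟩ : ↥(D ∪ D')) : ℤ × ℤ) ∈ D := by
  intro x hx
  rcases Finset.mem_union.mp (p ⟨x, Finset.mem_union_left _ hx⟩).property with h | h
  · exact h
  · exact absurd (hp ⟨x, Finset.mem_union_left _ hx⟩).symm (hrow x hx _ h)

lemma mapsD'_of_row (hrow : ∀ x ∈ D, ∀ y ∈ D', x.1 ≠ y.1) (p : Equiv.Perm ↥(D ∪ D')) (hp : RowP (D ∪ D') p) :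
    ∀ (x : ℤ × ℤ) (hx : x ∈ D'),
      ((p ⟨x, Finset.mem_union_right _ hx⟩ : ↥(D ∪ D')) : ℤ × ℤ) ∈ D' := by
  intro x hx
  rcases Finset.mem_union.mp (p ⟨x, Finset.mem_union_right _ hx⟩).property with h | h
  · exact absurd (hp ⟨x, Finset.mem_union_right _ hx⟩) (hrow _ h x hx)
  · exact h

lemma mapsD_of_col (hcol : ∀ x ∈ D, ∀ y ∈ D', x.2 ≠ y.2) (q : Equiv.Perm ↥(D ∪ D')) (hq : ColP (D ∪ D') q) :
    ∀ (x : ℤ × ℤ) (hx : x ∈ D),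
      ((q ⟨x, Finset.mem_union_left _ hx⟩ : ↥(D ∪ D')) : ℤ × ℤ) ∈ D := by
  intro x hx
  rcases Finset.mem_union.mp (q ⟨x, Finset.mem_union_left _ hx⟩).property with h | h
  · exact h
  · exact absurd (hq ⟨x, Finset.mem_union_left _ hx⟩).symm (hcol x hx _ h)

lemma mapsD'_of_col (hcol : ∀ x ∈ D, ∀ y ∈ D', x.2 ≠ y.2) (q : Equiv.Perm ↥(D ∪ D')) (hq : ColP (D ∪ D') q) :
    ∀ (x : ℤ × ℤ) (hx : x ∈ D'),
      ((q ⟨x, Finset.mem_union_right _ hx⟩ : ↥(D ∪ D')) : ℤ × ℤ) ∈ D' := by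
  intro x hx
  rcases Finset.mem_union.mp (q ⟨x, Finset.mem_union_right _ hx⟩).property with h | h
  · exact absurd (hq ⟨x, Finset.mem_union_right _ hx⟩) (hcol _ h x hx)
  · exact h

lemma RowP_restrD (p : Equiv.Perm ↥(D ∪ D')) (hm) (hp : RowP (D ∪ D') p) :
    RowP D (restrD D D' p hm) :=
  fun a => hp ⟨a.val, Finset.mem_union_left _ a.property⟩

lemma RowP_restrD' (p : Equiv.Perm ↥(D ∪ D')) (hm) (hp : RowP (D ∪ D') p) :
    RowP D' (restrD' D D' p hm) :=
  fun b => hp ⟨b.val, Finset.mem_union_right _ b.property⟩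

lemma ColP_restrD (q : Equiv.Perm ↥(D ∪ D')) (hm) (hq : ColP (D ∪ D') q) :
    ColP D (restrD D D' q hm) :=
  fun a => hq ⟨a.val, Finset.mem_union_left _ a.property⟩

lemma ColP_restrD' (q : Equiv.Perm ↥(D ∪ D')) (hm) (hq : ColP (D ∪ D') q) :
    ColP D' (restrD' D D' q hm) :=
  fun b => hq ⟨b.val, Finset.mem_union_right _ b.property⟩

lemma mem_not_D {x : ↥(D ∪ D')} (h : (x : ℤ × ℤ) ∉ D) : (x : ℤ × ℤ) ∈ D' := by
  rcases Finset.mem_union.mp x.property with h' | h'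
  · exact absurd h' h
  · exact h'

lemma RowP_sumPerm (σ₁ : Equiv.Perm ↥D) (σ₂ : Equiv.Perm ↥D')
    (h₁ : RowP D σ₁) (h₂ : RowP D' σ₂) : RowP (D ∪ D') (sumPerm D D' hd σ₁ σ₂) := by
  intro x
  by_cases h : (x : ℤ × ℤ) ∈ D
  · rw [sumPerm_apply_inD D D' hd σ₁ σ₂ x h]
    exact h₁ ⟨x, h⟩
  · rw [sumPerm_apply_inD' D D' hd σ₁ σ₂ x (mem_not_D D D' h)]
    exact h₂ ⟨x, mem_not_D D D' h⟩

lemma ColP_sumPerm (σ₁ : Equiv.Perm ↥D) (σ₂ : Equiv.Perm ↥D')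
    (h₁ : ColP D σ₁) (h₂ : ColP D' σ₂) : ColP (D ∪ D') (sumPerm D D' hd σ₁ σ₂) := by
  intro x
  by_cases h : (x : ℤ × ℤ) ∈ D
  · rw [sumPerm_apply_inD D D' hd σ₁ σ₂ x h]
    exact h₁ ⟨x, h⟩
  · rw [sumPerm_apply_inD' D D' hd σ₁ σ₂ x (mem_not_D D D' h)]
    exact h₂ ⟨x, mem_not_D D D' h⟩

lemma sumPerm_restr (p : Equiv.Perm ↥(D ∪ D')) (hmD) (hmD') :
    sumPerm D D' hd (restrD D D' p hmD) (restrD' D D' p hmD') = p := by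
  refine Equiv.ext fun x => ?_
  by_cases h : (x : ℤ × ℤ) ∈ D
  · rw [sumPerm_apply_inD D D' hd _ _ x h]
    refine Subtype.ext ?_
    show ((restrD D D' p hmD ⟨x, h⟩ : ↥D) : ℤ × ℤ) = ((p x : ↥(D ∪ D')) : ℤ × ℤ)
    rw [restrD_coe]
  · rw [sumPerm_apply_inD' D D' hd _ _ x (mem_not_D D D' h)]
    refine Subtype.ext ?_
    show ((restrD' D D' p hmD' ⟨x, mem_not_D D D' h⟩ : ↥D') : ℤ × ℤ)
      = ((p x : ↥(D ∪ D')) : ℤ × ℤ)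
    rw [restrD'_coe]

lemma restrD_sumPerm (σ₁ : Equiv.Perm ↥D) (σ₂ : Equiv.Perm ↥D') (hm) :
    restrD D D' (sumPerm D D' hd σ₁ σ₂) hm = σ₁ := by
  refine Equiv.ext fun a => Subtype.ext ?_
  rw [restrD_coe, sumPerm_apply_inD D D' hd σ₁ σ₂ _ a.property]

lemma restrD'_sumPerm (σ₁ : Equiv.Perm ↥D) (σ₂ : Equiv.Perm ↥D') (hm) :
    restrD' D D' (sumPerm D D' hd σ₁ σ₂) hm = σ₂ := by
  refine Equiv.ext fun b => Subtype.ext ?_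
  rw [restrD'_coe, sumPerm_apply_inD' D D' hd σ₁ σ₂ _ b.property]

/-- The canonical splitting of the tensor power over the union. -/
noncomputable def Phi : (⨂[ℂ] _ : ↥(D ∪ D'), V) ≃ₗ[ℂ]
    ((⨂[ℂ] _ : ↥D, V) ⊗[ℂ] (⨂[ℂ] _ : ↥D', V)) :=
  (PiTensorProduct.reindex ℂ (fun _ : ↥(D ∪ D') => V) (uE D D' hd)).trans
    (PiTensorProduct.tmulEquiv ℂ V).symm

lemma Phi_tprod (f : ↥(D ∪ D') → V) :
    Phi D D' hd (PiTensorProduct.tprod ℂ f)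
      = (PiTensorProduct.tprod ℂ
          (fun i : ↥D => f ⟨i.val, Finset.mem_union_left _ i.property⟩)) ⊗ₜ[ℂ]
        (PiTensorProduct.tprod ℂ
          (fun j : ↥D' => f ⟨j.val, Finset.mem_union_right _ j.property⟩)) := by
  simp only [Phi, LinearEquiv.trans_apply, reindex_tprod, tmulEquiv_symm_apply]
  rfl

lemma Phi_rLM (σ₁ : Equiv.Perm ↥D) (σ₂ : Equiv.Perm ↥D') (x : ⨂[ℂ] _ : ↥(D ∪ D'), V) :
    Phi D D' hd (rLM V (D ∪ D') (sumPerm D D' hd σ₁ σ₂) x)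
      = TensorProduct.map (rLM V D σ₁) (rLM V D' σ₂) (Phi D D' hd x) := by
  have key : (Phi D D' hd (V := V)).toLinearMap ∘ₗ rLM V (D ∪ D') (sumPerm D D' hd σ₁ σ₂)
      = TensorProduct.map (rLM V D σ₁) (rLM V D' σ₂) ∘ₗ
          (Phi D D' hd (V := V)).toLinearMap := by
    refine PiTensorProduct.ext (MultilinearMap.ext fun f => ?_)
    have hkl : ∀ i : ↥D, (sumPerm D D' hd σ₁ σ₂).symm
        ⟨i.val, Finset.mem_union_left _ i.property⟩
        = ⟨((σ₁.symm i : ↥D) : ℤ × ℤ),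
            Finset.mem_union_left _ (σ₁.symm i).property⟩ := by
      intro i
      rw [sumPerm_symm]
      exact sumPerm_apply_inD D D' hd σ₁.symm σ₂.symm _ i.property
    have hkr : ∀ j : ↥D', (sumPerm D D' hd σ₁ σ₂).symm
        ⟨j.val, Finset.mem_union_right _ j.property⟩
        = ⟨((σ₂.symm j : ↥D') : ℤ × ℤ),
            Finset.mem_union_right _ (σ₂.symm j).property⟩ := by
      intro j
      rw [sumPerm_symm]
      exact sumPerm_apply_inD' D D' hd σ₁.symm σ₂.symm _ j.property
    simp only [LinearMap.compMultilinearMap_apply, LinearMap.coe_comp, Function.comp_apply,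
      LinearEquiv.coe_coe, rLM, reindex_tprod, Phi_tprod, TensorProduct.map_tmul]
    congr 1
    · exact congrArg (PiTensorProduct.tprod ℂ)
        (funext fun i => congrArg f (hkl i))
    · exact congrArg (PiTensorProduct.tprod ℂ)
        (funext fun j => congrArg f (hkr j))
  exact DFunLike.congr_fun key x

lemma Phi_glOp (g : V ≃ₗ[ℂ] V) (x : ⨂[ℂ] _ : ↥(D ∪ D'), V) :
    Phi D D' hd (glOp V (D ∪ D') g x)
      = TensorProduct.map (glOp V D g) (glOp V D' g) (Phi D D' hd x) := by
  have key : (Phi D D' hd (V := V)).toLinearMap ∘ₗ glOp V (D ∪ D') g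
      = TensorProduct.map (glOp V D g) (glOp V D' g) ∘ₗ
          (Phi D D' hd (V := V)).toLinearMap := by
    refine PiTensorProduct.ext (MultilinearMap.ext fun f => ?_)
    simp only [LinearMap.compMultilinearMap_apply, LinearMap.coe_comp, Function.comp_apply,
      LinearEquiv.coe_coe, glOp, map_tprod, Phi_tprod, TensorProduct.map_tmul]
  exact DFunLike.congr_fun key x

lemma youngOp_eq_filtered2 (S : Finset (ℤ × ℤ)) :
    youngOp V S =
      ∑ z ∈ (Finset.univ.filter (RowP S)) ×ˢ (Finset.univ.filter (ColP S)),
        ((Equiv.Perm.sign z.2 : ℤ) : ℂ) • rLM V S (z.2 * z.1) := by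
  rw [youngOp_eq_filtered, ← Finset.sum_product']

lemma Phi_youngOp (hrow : ∀ x ∈ D, ∀ y ∈ D', x.1 ≠ y.1)
    (hcol : ∀ x ∈ D, ∀ y ∈ D', x.2 ≠ y.2) (x : ⨂[ℂ] _ : ↥(D ∪ D'), V) :
    Phi D D' hd (youngOp V (D ∪ D') x)
      = TensorProduct.map (youngOp V D) (youngOp V D') (Phi D D' hd x) := by
  rw [youngOp_eq_filtered2 (V := V) (D ∪ D'), youngOp_eq_filtered2 (V := V) D,
    youngOp_eq_filtered2 (V := V) D']
  simp only [LinearMap.coe_sum, Finset.sum_apply, map_sum, LinearMap.smul_apply, map_smul]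
  rw [← TensorProduct.mapBilinear_apply]
  simp only [map_sum, LinearMap.sum_apply, map_smul, LinearMap.smul_apply,
    TensorProduct.mapBilinear_apply]
  simp only [Finset.smul_sum]
  rw [Finset.sum_comm]
  rw [← Finset.sum_product']
  refine (Finset.sum_bij'
    (i := fun z (_ : z ∈ ((Finset.univ.filter (RowP D)) ×ˢ (Finset.univ.filter (ColP D))) ×ˢ
        ((Finset.univ.filter (RowP D')) ×ˢ (Finset.univ.filter (ColP D')))) =>
      (sumPerm D D' hd z.1.1 z.2.1, sumPerm D D' hd z.1.2 z.2.2))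
    (j := fun w hw =>
      ((restrD D D' w.1 (mapsD_of_row D D' hrow w.1
          (Finset.mem_filter.mp (Finset.mem_product.mp hw).1).2),
        restrD D D' w.2 (mapsD_of_col D D' hcol w.2
          (Finset.mem_filter.mp (Finset.mem_product.mp hw).2).2)),
       (restrD' D D' w.1 (mapsD'_of_row D D' hrow w.1
          (Finset.mem_filter.mp (Finset.mem_product.mp hw).1).2),
        restrD' D D' w.2 (mapsD'_of_col D D' hcol w.2
          (Finset.mem_filter.mp (Finset.mem_product.mp hw).2).2))))
    ?_ ?_ ?_ ?_ ?_).symm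
  · intro z hz
    obtain ⟨hz1, hz2⟩ := Finset.mem_product.mp hz
    obtain ⟨hp1, hq1⟩ := Finset.mem_product.mp hz1
    obtain ⟨hp2, hq2⟩ := Finset.mem_product.mp hz2
    refine Finset.mem_product.mpr ⟨Finset.mem_filter.mpr ⟨Finset.mem_univ _, ?_⟩,
      Finset.mem_filter.mpr ⟨Finset.mem_univ _, ?_⟩⟩
    · exact RowP_sumPerm D D' hd _ _ (Finset.mem_filter.mp hp1).2 (Finset.mem_filter.mp hp2).2
    · exact ColP_sumPerm D D' hd _ _ (Finset.mem_filter.mp hq1).2 (Finset.mem_filter.mp hq2).2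
  · intro w hw
    refine Finset.mem_product.mpr ⟨Finset.mem_product.mpr ⟨?_, ?_⟩,
      Finset.mem_product.mpr ⟨?_, ?_⟩⟩
    · exact Finset.mem_filter.mpr ⟨Finset.mem_univ _, RowP_restrD D D' w.1
        (mapsD_of_row D D' hrow w.1 (Finset.mem_filter.mp (Finset.mem_product.mp hw).1).2)
        (Finset.mem_filter.mp (Finset.mem_product.mp hw).1).2⟩
    · exact Finset.mem_filter.mpr ⟨Finset.mem_univ _, ColP_restrD D D' w.2
        (mapsD_of_col D D' hcol w.2 (Finset.mem_filter.mp (Finset.mem_product.mp hw).2).2)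
        (Finset.mem_filter.mp (Finset.mem_product.mp hw).2).2⟩
    · exact Finset.mem_filter.mpr ⟨Finset.mem_univ _, RowP_restrD' D D' w.1
        (mapsD'_of_row D D' hrow w.1 (Finset.mem_filter.mp (Finset.mem_product.mp hw).1).2)
        (Finset.mem_filter.mp (Finset.mem_product.mp hw).1).2⟩
    · exact Finset.mem_filter.mpr ⟨Finset.mem_univ _, ColP_restrD' D D' w.2
        (mapsD'_of_col D D' hcol w.2 (Finset.mem_filter.mp (Finset.mem_product.mp hw).2).2)
        (Finset.mem_filter.mp (Finset.mem_product.mp hw).2).2⟩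
  · intro z hz
    refine Prod.ext (Prod.ext ?_ ?_) (Prod.ext ?_ ?_) <;>
      simp only [restrD_sumPerm, restrD'_sumPerm]
  · intro w hw
    refine Prod.ext ?_ ?_ <;> simp only [sumPerm_restr]
  · intro z hz
    rw [sumPerm_mul, Phi_rLM, sign_sumPerm]
    rw [smul_smul]
    rw [Units.val_mul, Int.cast_mul]
    rw [mul_comm]

end Union


end Stmt14Aux

theorem stmt14 (V : Type*) [AddCommGroup V] [Module ℂ V] [FiniteDimensional ℂ V]
    (D D' : Finset (ℤ × ℤ))
    (hrow : ∀ x ∈ D, ∀ y ∈ D', x.1 ≠ y.1)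
    (hcol : ∀ x ∈ D, ∀ y ∈ D', x.2 ≠ y.2) :
    ∃ (h : ∀ g : V ≃ₗ[ℂ] V, ∀ v ∈ schurModule V (D ∪ D'),
        glOp V (D ∪ D') g v ∈ schurModule V (D ∪ D'))
      (h1 : ∀ g : V ≃ₗ[ℂ] V, ∀ v ∈ schurModule V D,
        glOp V D g v ∈ schurModule V D)
      (h2 : ∀ g : V ≃ₗ[ℂ] V, ∀ v ∈ schurModule V D',
        glOp V D' g v ∈ schurModule V D')
      (e : ↥(schurModule V (D ∪ D')) ≃ₗ[ℂ]
        (↥(schurModule V D) ⊗[ℂ] ↥(schurModule V D'))),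
      ∀ (g : V ≃ₗ[ℂ] V) (v : ↥(schurModule V (D ∪ D'))),
        e ⟨glOp V (D ∪ D') g v, h g v v.2⟩ =
          TensorProduct.map ((glOp V D g).restrict (h1 g))
            ((glOp V D' g).restrict (h2 g)) (e v) := by
  classical
  have hd : ∀ a ∈ D, a ∉ D' := fun a ha ha' => hrow a ha a ha' rfl
  have hsD : schurModule V D = LinearMap.range (youngOp V D) := rfl
  have hsD' : schurModule V D' = LinearMap.range (youngOp V D') := rfl
  set ι : (↥(schurModule V D) ⊗[ℂ] ↥(schurModule V D')) →ₗ[ℂ]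
      ((⨂[ℂ] _ : ↥D, V) ⊗[ℂ] (⨂[ℂ] _ : ↥D', V)) :=
    TensorProduct.map (schurModule V D).subtype (schurModule V D').subtype with hι_def
  have hι : Function.Injective ι := by
    have h1 : Function.Injective
        (LinearMap.rTensor (⨂[ℂ] _ : ↥D', V) (schurModule V D).subtype) :=
      Module.Flat.rTensor_preserves_injective_linearMap _ (Submodule.injective_subtype _)
    have h2 : Function.Injective
        (LinearMap.lTensor ↥(schurModule V D) (schurModule V D').subtype) :=
      Module.Flat.lTensor_preserves_injective_linearMap _ (Submodule.injective_subtype _)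
    have h3 : ι = (LinearMap.rTensor _ (schurModule V D).subtype) ∘ₗ
        (LinearMap.lTensor _ (schurModule V D').subtype) := by
      rw [hι_def, LinearMap.rTensor_comp_lTensor]
    rw [h3, LinearMap.coe_comp]
    exact h1.comp h2
  have hrange : LinearMap.range (TensorProduct.map (youngOp V D) (youngOp V D'))
      = LinearMap.range ι := by
    have hfac : TensorProduct.map (youngOp V D) (youngOp V D')
        = ι ∘ₗ TensorProduct.map (youngOp V D).rangeRestrict
            (youngOp V D').rangeRestrict := by
      have hc1 : (schurModule V D).subtype ∘ₗ (youngOp V D).rangeRestrict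
          = youngOp V D := LinearMap.ext fun x => rfl
      have hc2 : (schurModule V D').subtype ∘ₗ (youngOp V D').rangeRestrict
          = youngOp V D' := LinearMap.ext fun x => rfl
      rw [hι_def]
      exact TensorProduct.ext' fun x y => rfl
    rw [hfac, LinearMap.range_comp]
    have hsurj : Function.Surjective (TensorProduct.map (youngOp V D).rangeRestrict
        (youngOp V D').rangeRestrict) :=
      TensorProduct.map_surjective (LinearMap.surjective_rangeRestrict _)
        (LinearMap.surjective_rangeRestrict _)
    refine le_antisymm (Submodule.map_le_iff_le_comap.mpr fun z _ => ⟨z, rfl⟩) ?_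
    rintro _ ⟨z, rfl⟩
    obtain ⟨w, hw⟩ := hsurj z
    exact ⟨z, ⟨w, hw⟩, rfl⟩
  have hmap : Submodule.map (Stmt14Aux.Phi D D' hd (V := V) : _ →ₗ[ℂ] _)
      (schurModule V (D ∪ D')) = LinearMap.range ι := by
    have h0 : schurModule V (D ∪ D') = LinearMap.range (youngOp V (D ∪ D')) := rfl
    rw [h0, ← LinearMap.range_comp]
    have h1 : (Stmt14Aux.Phi D D' hd (V := V) : _ →ₗ[ℂ] _) ∘ₗ youngOp V (D ∪ D')
        = (TensorProduct.map (youngOp V D) (youngOp V D')) ∘ₗ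
            (Stmt14Aux.Phi D D' hd (V := V) : _ →ₗ[ℂ] _) :=
      LinearMap.ext fun x => Stmt14Aux.Phi_youngOp D D' hd hrow hcol x
    rw [h1, LinearMap.range_comp, LinearEquiv.range, Submodule.map_top, hrange]
  let e : ↥(schurModule V (D ∪ D')) ≃ₗ[ℂ]
      (↥(schurModule V D) ⊗[ℂ] ↥(schurModule V D')) :=
    (((Stmt14Aux.Phi D D' hd (V := V)).submoduleMap (schurModule V (D ∪ D'))).trans
      (LinearEquiv.ofEq _ _ hmap)).trans (LinearEquiv.ofInjective ι hι).symm
  have hchar : ∀ v : ↥(schurModule V (D ∪ D')),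
      ι (e v) = Stmt14Aux.Phi D D' hd (V := V) (v : ⨂[ℂ] _ : ↥(D ∪ D'), V) := by
    intro v
    simp [e, LinearEquiv.trans_apply, LinearEquiv.coe_ofEq_apply,
      LinearEquiv.submoduleMap_apply]
  refine ⟨Stmt14Aux.glOp_mem_schurModule (D ∪ D'), Stmt14Aux.glOp_mem_schurModule D,
    Stmt14Aux.glOp_mem_schurModule D', e, ?_⟩
  intro g v
  have hcomm : ι ∘ₗ TensorProduct.map
      ((glOp V D g).restrict (Stmt14Aux.glOp_mem_schurModule D g))
      ((glOp V D' g).restrict (Stmt14Aux.glOp_mem_schurModule D' g))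
      = TensorProduct.map (glOp V D g) (glOp V D' g) ∘ₗ ι := by
    rw [hι_def, ← TensorProduct.map_comp, ← TensorProduct.map_comp,
      LinearMap.subtype_comp_restrict, LinearMap.subtype_comp_restrict]
    rfl
  apply hι
  rw [hchar]
  show Stmt14Aux.Phi D D' hd (V := V) (glOp V (D ∪ D') g ↑v) = _
  rw [Stmt14Aux.Phi_glOp D D' hd g, ← hchar v]
  exact (DFunLike.congr_fun hcomm (e v)).symm
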